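/- Fix k ∈ ℕ, Δ > 0 and ε > 0, and set b = Δ/ε. For a ∈ ℝ^k let μ_a be the measure on ℝ^k with density x ↦ ∏_{j=1}^k (1/(2b))·exp(−|x_j − a_j|/b) with respect to Lebesgue measure. If a, a' ∈ ℝ^k satisfy Σ_{j=1}^k |a_j − a'_j| ≤ Δ, then for every measurable set S ⊆ ℝ^k, μ_a(S) ≤ e^ε · μ_{a'}(S). In other words, releasing a vector-valued quantity of L1-sensitivity at most Δ after adding i.i.d. Laplace noise of scale Δ/ε to each coordinate satisfies the ε-differential-privacy bound. -/
import Mathlib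


open MeasureTheory

/-- **The multivariate Laplace mechanism satisfies the ε-DP bound.**
Fix `k`, `Δ > 0`, `ε > 0` and set `b = Δ / ε`.  For `a : Fin k → ℝ` let `μ_a` be the
measure on `ℝ^k` with density `x ↦ ∏ j, (1/(2b)) exp (-|x j - a j| / b)` with respect
to Lebesgue measure.  If `a, a'` satisfy `∑ j, |a j - a' j| ≤ Δ` (L1-sensitivity at
most `Δ`), then for every measurable set `S`, `μ_a S ≤ e^ε · μ_{a'} S`. -/
theorem laplace_mechanism_dp_bound
    (k : ℕ) (Δ ε : ℝ) (hΔ : 0 < Δ) (hε : 0 < ε) (b : ℝ) (hb : b = Δ / ε)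
    (a a' : Fin k → ℝ) (hsens : ∑ j, |a j - a' j| ≤ Δ)
    (S : Set (Fin k → ℝ)) (hS : MeasurableSet S) :
    (volume.withDensity
        (fun x => ENNReal.ofReal (∏ j, (1 / (2 * b)) * Real.exp (-|x j - a j| / b)))) S ≤
      ENNReal.ofReal (Real.exp ε) *
        (volume.withDensity
          (fun x => ENNReal.ofReal (∏ j, (1 / (2 * b)) * Real.exp (-|x j - a' j| / b)))) S := by
  have hb0 : 0 < b := by rw [hb]; positivity
  have key : ∀ x : Fin k → ℝ,
      ENNReal.ofReal (∏ j, (1 / (2 * b)) * Real.exp (-|x j - a j| / b)) ≤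
      ENNReal.ofReal (Real.exp ε) *
        ENNReal.ofReal (∏ j, (1 / (2 * b)) * Real.exp (-|x j - a' j| / b)) := by
    intro x
    rw [← ENNReal.ofReal_mul (Real.exp_nonneg ε)]
    apply ENNReal.ofReal_le_ofReal
    have hAB : (∑ j, -|x j - a j|) - (∑ j, -|x j - a' j|) ≤ Δ := by
      rw [← Finset.sum_sub_distrib]
      refine le_trans (Finset.sum_le_sum fun j _ => ?_) hsens
      have h := abs_sub_abs_le_abs_sub (x j - a' j) (x j - a j)
      have h2 : (x j - a' j) - (x j - a j) = a j - a' j := by ring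
      rw [h2] at h
      linarith
    have hεb : ε * b = Δ := by rw [hb]; field_simp
    have hsum : ∑ j, (-|x j - a j| / b) ≤ ε + ∑ j, (-|x j - a' j| / b) := by
      rw [← Finset.sum_div, ← Finset.sum_div, div_le_iff₀ hb0, add_mul,
        div_mul_cancel₀ _ hb0.ne']
      linarith
    rw [Finset.prod_mul_distrib, Finset.prod_mul_distrib, ← Real.exp_sum, ← Real.exp_sum]
    have hC : (0:ℝ) ≤ ∏ _j : Fin k, (1 / (2 * b)) :=
      Finset.prod_nonneg (fun j _ => by positivity)
    calc (∏ _j : Fin k, (1 / (2 * b))) * Real.exp (∑ j, (-|x j - a j| / b))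
        ≤ (∏ _j : Fin k, (1 / (2 * b))) *
            (Real.exp ε * Real.exp (∑ j, (-|x j - a' j| / b))) := by
          apply mul_le_mul_of_nonneg_left _ hC
          rw [← Real.exp_add]
          exact Real.exp_le_exp.mpr hsum
      _ = Real.exp ε * ((∏ _j : Fin k, (1 / (2 * b))) *
            Real.exp (∑ j, (-|x j - a' j| / b))) := by ring
  rw [withDensity_apply _ hS, withDensity_apply _ hS, ← lintegral_const_mul' _ _
    ENNReal.ofReal_ne_top]
  exact lintegral_mono fun x => key x
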